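/- For the k-dimensional Lyness map F with parameter a ≥ 0, the function V_2(x) = (a + Σ_{i=1}^k x_i + x_1 x_k)·(Π_{i=1}^{k-1}(1 + x_i + x_{i+1}))/(x_1···x_k) is a first integral of F on the positive orthant: V_2(F(x)) = V_2(x). -/

import Mathlib

/-- `V₂` is a first integral of the `k`-dimensional Lyness map. -/
theorem lyness_V2_first_integral (k : ℕ) (hk : 2 ≤ k) (a : ℝ) (ha : 0 ≤ a)
    (F : (Fin k → ℝ) → (Fin k → ℝ))
    (hF : ∀ x : Fin k → ℝ, ∀ i : Fin k,
      F x i = if h : (i : ℕ) + 1 < k then x ⟨(i : ℕ) + 1, h⟩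
              else (a + (∑ j, x j) - x ⟨0, by omega⟩) / x ⟨0, by omega⟩)
    (V2 : (Fin k → ℝ) → ℝ)
    (hV2 : ∀ x : Fin k → ℝ, V2 x =
      (a + (∑ j, x j) + x ⟨0, by omega⟩ * x ⟨k - 1, by omega⟩) *
        (∏ i : Fin (k - 1), (1 + x ⟨(i : ℕ), by have := i.isLt; omega⟩
          + x ⟨(i : ℕ) + 1, by have := i.isLt; omega⟩)) / ∏ j, x j)
    (x : Fin k → ℝ) (hx : ∀ i, 0 < x i) :
    V2 (F x) = V2 x := by
  classical
  have h0k : (0:ℕ) < k := by omega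
  have h1k : (1:ℕ) < k := by omega
  set X : ℕ → ℝ := fun n => if h : n < k then x ⟨n, h⟩ else 1 with hXdef
  have hXeq : ∀ (n : ℕ) (h : n < k), X n = x ⟨n, h⟩ := fun n h => dif_pos h
  have hXpos : ∀ (n : ℕ), n < k → 0 < X n := by
    intro n h; rw [hXeq n h]; exact hx _
  set S : ℝ := ∑ n ∈ Finset.range k, X n with hSdef
  have hS : (∑ j, x j) = S := by
    rw [hSdef, ← Fin.sum_univ_eq_sum_range]
    exact Finset.sum_congr rfl fun j _ => (hXeq _ j.isLt).symm
  set T : ℝ := a + S - X 0 with hTdef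
  set z : ℝ := T / X 0 with hzdef
  set W : ℕ → ℝ := fun n => if n + 1 < k then X (n+1) else z with hWdef
  have hFval : ∀ (n : ℕ) (h : n < k), F x ⟨n, h⟩ = W n := by
    intro n h
    rw [hF x ⟨n, h⟩]; simp only [hWdef]
    by_cases h' : n + 1 < k
    · rw [dif_pos h', if_pos h', hXeq (n+1) h']
    · rw [dif_neg h', if_neg h', hS, hzdef, hTdef, hXeq 0 h0k]
  -- sums
  set SR : ℝ := ∑ n ∈ Finset.range (k-1), X (n+1) with hSRdef
  have hSsplit : S = SR + X 0 := by
    rw [hSdef, show k = (k-1)+1 by omega, Finset.sum_range_succ', hSRdef]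
  have hSF : (∑ j, F x j) = SR + z := by
    have : (∑ j, F x j) = ∑ j : Fin k, W (j : ℕ) :=
      Finset.sum_congr rfl fun j _ => hFval _ j.isLt
    rw [this, Fin.sum_univ_eq_sum_range W k, show k = (k-1)+1 by omega,
      Finset.sum_range_succ]
    have h1 : ∑ n ∈ Finset.range (k-1), W n = SR := by
      refine Finset.sum_congr rfl fun n hn => ?_
      rw [Finset.mem_range] at hn
      simp only [hWdef]; exact if_pos (by omega)
    have h2 : W (k-1) = z := by
      simp only [hWdef]; exact if_neg (by omega)
    rw [h1, h2]
  -- products of coordinates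
  set R : ℝ := ∏ n ∈ Finset.range (k-1), X (n+1) with hRdef
  have hQ : (∏ j, x j) = R * X 0 := by
    have : (∏ j, x j) = ∏ n ∈ Finset.range k, X n := by
      rw [← Fin.prod_univ_eq_prod_range]
      exact Finset.prod_congr rfl fun j _ => (hXeq _ j.isLt).symm
    rw [this, show k = (k-1)+1 by omega, Finset.prod_range_succ', hRdef]
  have hQF : (∏ j, F x j) = R * z := by
    have : (∏ j, F x j) = ∏ n ∈ Finset.range k, W n := by
      rw [← Fin.prod_univ_eq_prod_range]
      exact Finset.prod_congr rfl fun j _ => hFval _ j.isLt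
    rw [this, show k = (k-1)+1 by omega, Finset.prod_range_succ]
    have h1 : ∏ n ∈ Finset.range (k-1), W n = R := by
      refine Finset.prod_congr rfl fun n hn => ?_
      rw [Finset.mem_range] at hn
      simp only [hWdef]; exact if_pos (by omega)
    have h2 : W (k-1) = z := by
      simp only [hWdef]; exact if_neg (by omega)
    rw [h1, h2]
  -- the (1 + · + ·) products
  set P : ℝ := ∏ n ∈ Finset.range (k-2), (1 + X (n+1) + X (n+2)) with hPdef
  have hPx : (∏ i : Fin (k - 1), (1 + x ⟨(i : ℕ), by have := i.isLt; omega⟩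
          + x ⟨(i : ℕ) + 1, by have := i.isLt; omega⟩))
      = (1 + X 0 + X 1) * P := by
    have e1 : (∏ i : Fin (k - 1), (1 + x ⟨(i : ℕ), by have := i.isLt; omega⟩
          + x ⟨(i : ℕ) + 1, by have := i.isLt; omega⟩))
        = ∏ n ∈ Finset.range (k-1), (1 + X n + X (n+1)) := by
      rw [← Fin.prod_univ_eq_prod_range (fun n => 1 + X n + X (n+1)) (k-1)]
      refine Finset.prod_congr rfl fun i _ => ?_
      have h1 : (i : ℕ) < k := by have := i.isLt; omega
      have h2 : (i : ℕ) + 1 < k := by have := i.isLt; omega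
      rw [hXeq _ h1, hXeq _ h2]
    rw [e1, show k - 1 = (k-2)+1 by omega, Finset.prod_range_succ', hPdef]
    ring
  have hPF : (∏ i : Fin (k - 1), (1 + F x ⟨(i : ℕ), by have := i.isLt; omega⟩
          + F x ⟨(i : ℕ) + 1, by have := i.isLt; omega⟩))
      = P * (1 + X (k-1) + z) := by
    have e1 : (∏ i : Fin (k - 1), (1 + F x ⟨(i : ℕ), by have := i.isLt; omega⟩
          + F x ⟨(i : ℕ) + 1, by have := i.isLt; omega⟩))
        = ∏ n ∈ Finset.range (k-1), (1 + W n + W (n+1)) := by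
      rw [← Fin.prod_univ_eq_prod_range (fun n => 1 + W n + W (n+1)) (k-1)]
      refine Finset.prod_congr rfl fun i _ => ?_
      have h1 : (i : ℕ) < k := by have := i.isLt; omega
      have h2 : (i : ℕ) + 1 < k := by have := i.isLt; omega
      rw [hFval _ h1, hFval _ h2]
    rw [e1, show k - 1 = (k-2)+1 by omega, Finset.prod_range_succ, hPdef]
    have h1 : ∏ n ∈ Finset.range (k-2), (1 + W n + W (n+1))
        = ∏ n ∈ Finset.range (k-2), (1 + X (n+1) + X (n+2)) := by
      refine Finset.prod_congr rfl fun n hn => ?_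
      rw [Finset.mem_range] at hn
      simp only [hWdef]
      simp only [if_pos (show n+1 < k by omega), if_pos (show n+1+1 < k by omega)]
    have h2 : (1 + W (k-2) + W (k-2+1)) = 1 + X (k-1) + z := by
      simp only [hWdef]
      simp only [if_pos (show k-2+1 < k by omega), if_neg (show ¬ (k-2+1+1 < k) by omega)]
      rw [show k-2+1 = k-1 from by omega]
    rw [h1, h2, show k-2+1 = k-1 from by omega]
  -- edge coordinates
  have hF0 : F x ⟨0, by omega⟩ = X 1 := by
    rw [hFval 0 h0k]; simp only [hWdef]; exact if_pos h1k
  have hFk : F x ⟨k - 1, by omega⟩ = z := by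
    rw [hFval (k-1) (by omega)]; simp only [hWdef]; exact if_neg (by omega)
  have hx0 : x ⟨0, by omega⟩ = X 0 := (hXeq 0 h0k).symm
  have hxk : x ⟨k - 1, by omega⟩ = X (k-1) := (hXeq (k-1) (by omega)).symm
  -- positivity / nonzeroness
  have hX0 : (0:ℝ) < X 0 := hXpos 0 h0k
  have hRpos : (0:ℝ) < R := by
    rw [hRdef]
    exact Finset.prod_pos fun n hn => hXpos _ (by rw [Finset.mem_range] at hn; omega)
  have hSRpos : (0:ℝ) < SR := by
    rw [hSRdef]
    refine Finset.sum_pos (fun n hn => hXpos _ (by rw [Finset.mem_range] at hn; omega)) ?_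
    exact ⟨0, Finset.mem_range.mpr (by omega)⟩
  have hTpos : (0:ℝ) < T := by rw [hTdef, hSsplit]; linarith
  have hzX : z * X 0 = T := by
    rw [hzdef]; field_simp
  -- finish
  rw [hV2 (F x), hV2 x, hSF, hS, hQF, hQ, hPx, hPF, hF0, hFk, hx0, hxk]
  have hX0' : X 0 ≠ 0 := ne_of_gt hX0
  have hR' : R ≠ 0 := ne_of_gt hRpos
  have hT' : T ≠ 0 := ne_of_gt hTpos
  have hz' : z ≠ 0 := by
    rw [hzdef]; exact div_ne_zero hT' hX0'
  rw [hzdef, hTdef, hSsplit]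
  have hz0 : a + (SR + X 0) - X 0 ≠ 0 := by
    intro h; apply hT'; rw [hTdef, hSsplit]; exact h
  field_simp
  ring
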